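/- Let D be a minimal strong digraph (MSD), C_q a directed cycle of length q contained in D, and D' the digraph obtained from D by deleting all arcs of C_q. If a strong component S of D' is an initial strong component (no arc of D' enters S) or a terminal strong component (no arc of D' leaves S), then S contains at least one vertex of C_q. -/
import Mathlib


/-- A digraph (given by its arc relation `A`) is strongly connected if every vertex
can reach every vertex by a directed path. -/
def StronglyConnected {V : Type*} (A : V → V → Prop) : Prop :=
  ∀ u v : V, Relation.ReflTransGen A u v

/-- A minimal strong digraph: strongly connected, and deleting any arc destroys
strong connectivity. -/
def IsMSD {V : Type*} (A : V → V → Prop) : Prop :=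
  StronglyConnected A ∧
    ∀ a b : V, A a b →
      ¬ StronglyConnected (fun x y => A x y ∧ ¬(x = a ∧ y = b))

/-- `c : ZMod q → V` describes a directed cycle of length `q` contained in the digraph `A`. -/
def IsCycleIn {V : Type*} (A : V → V → Prop) (q : ℕ) (c : ZMod q → V) : Prop :=
  2 ≤ q ∧ Function.Injective c ∧ ∀ i : ZMod q, A (c i) (c (i + 1))

/-- The digraph `D'` obtained from `A` by deleting all arcs of the cycle `c`. -/
def DelCycle {V : Type*} (A : V → V → Prop) (q : ℕ) (c : ZMod q → V) : V → V → Prop :=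
  fun x y => A x y ∧ ¬ ∃ i : ZMod q, x = c i ∧ y = c (i + 1)

/-- Mutual reachability of two vertices. -/
def MutReach {V : Type*} (A : V → V → Prop) (u v : V) : Prop :=
  Relation.ReflTransGen A u v ∧ Relation.ReflTransGen A v u

/-- `S` is (the vertex set of) a strong component of the digraph `A`. -/
def IsSC {V : Type*} (A : V → V → Prop) (S : Set V) : Prop :=
  ∃ v : V, S = {u | MutReach A v u}

/-- Indegree of `v`. -/
noncomputable def indeg {V : Type*} (A : V → V → Prop) (v : V) : ℕ := {u | A u v}.ncard

/-- Outdegree of `v`. -/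
noncomputable def outdeg {V : Type*} (A : V → V → Prop) (v : V) : ℕ := {u | A v u}.ncard

/-- A vertex is linear if its indegree and outdegree both equal 1. -/
def IsLinear {V : Type*} (A : V → V → Prop) (v : V) : Prop :=
  indeg A v = 1 ∧ outdeg A v = 1

/-- A vertex `v` is a cut point if deleting `v` (and its incident arcs) leaves a
digraph whose underlying graph is disconnected. -/
def IsCutPoint {V : Type*} (A : V → V → Prop) (v : V) : Prop :=
  ∃ x y : V, x ≠ v ∧ y ≠ v ∧
    ¬ Relation.ReflTransGen (fun a b => a ≠ v ∧ b ≠ v ∧ (A a b ∨ A b a)) x y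

/-- Adjacency in the condensation (Hasse diagram) of the digraph `A`:
two distinct strong components with an arc from the first to the second. -/
def HAdj {V : Type*} (A : V → V → Prop) (S T : Set V) : Prop :=
  IsSC A S ∧ IsSC A T ∧ S ≠ T ∧ ∃ u ∈ S, ∃ v ∈ T, A u v

noncomputable def HIndeg {V : Type*} (A : V → V → Prop) (S : Set V) : ℕ := {T : Set V | HAdj A T S}.ncard
noncomputable def HOutdeg {V : Type*} (A : V → V → Prop) (S : Set V) : ℕ := {T : Set V | HAdj A S T}.ncard

/-- A vertex of the Hasse diagram is linear if its indegree and outdegree there equal 1. -/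
def HLinear {V : Type*} (A : V → V → Prop) (S : Set V) : Prop :=
  HIndeg A S = 1 ∧ HOutdeg A S = 1

/-- Four elements of `ZMod q` appear in this cyclic order (all distinct). -/
def CyclicOrder4 {q : ℕ} (a b c d : ZMod q) : Prop :=
  0 < (b - a).val ∧ (b - a).val < (c - a).val ∧ (c - a).val < (d - a).val

lemma cross_arc {V : Type*} {R : V → V → Prop} {S : Set V} {a b : V}
    (h : Relation.ReflTransGen R a b) (ha : a ∉ S) (hb : b ∈ S) :
    ∃ x y, R x y ∧ x ∉ S ∧ y ∈ S := by
  induction h with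
  | refl => exact absurd hb ha
  | tail h1 h2 ih =>
    rename_i m b'
    by_cases hm : m ∈ S
    · exact ih hm
    · exact ⟨m, b', h2, hm, hb⟩

/-- Every initial or terminal strong component of `D'` contains a vertex of `C_q`. -/
theorem stmt3 {V : Type*} [Fintype V] (A : V → V → Prop) (q : ℕ) (c : ZMod q → V)
    (hMSD : IsMSD A) (hc : IsCycleIn A q c) (S : Set V) (hS : IsSC (DelCycle A q c) S)
    (h : (¬ ∃ x y : V, DelCycle A q c x y ∧ x ∉ S ∧ y ∈ S) ∨
         (¬ ∃ x y : V, DelCycle A q c x y ∧ x ∈ S ∧ y ∉ S)) :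
    ∃ i : ZMod q, c i ∈ S := by
  by_contra h0
  push_neg at h0
  obtain ⟨v, rfl⟩ := hS
  have hvS : v ∈ {u | MutReach (DelCycle A q c) v u} :=
    ⟨Relation.ReflTransGen.refl, Relation.ReflTransGen.refl⟩
  rcases h with hin | hout
  · obtain ⟨x, y, hxy, hx, hy⟩ := cross_arc (hMSD.1 (c 0) v) (h0 0) hvS
    by_cases hcyc : ∃ i : ZMod q, x = c i ∧ y = c (i + 1)
    · obtain ⟨i, _, rfl⟩ := hcyc
      exact h0 (i + 1) hy
    · exact hin ⟨x, y, ⟨hxy, hcyc⟩, hx, hy⟩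
  · obtain ⟨x, y, hxy, hx, hy⟩ :=
      cross_arc (R := A) (S := {u | MutReach (DelCycle A q c) v u}ᶜ)
        (hMSD.1 v (c 0)) (fun hv => hv hvS) (h0 0)
    simp only [Set.mem_compl_iff, not_not] at hx hy
    by_cases hcyc : ∃ i : ZMod q, x = c i ∧ y = c (i + 1)
    · obtain ⟨i, rfl, _⟩ := hcyc
      exact h0 i hx
    · exact hout ⟨x, y, ⟨hxy, hcyc⟩, hx, hy⟩
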